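/- Let G be a group, H ≤ G a subgroup, Y a G-set, T an H-set, and j : T → Y an injective H-equivariant map. Let E := (G × T)/H be the quotient of G × T by the H-action k · (g, t) := (g k⁻¹, k · t), and define ε : E → Y by ε([g, t]) := g · j(t). Then ε is well-defined, and ε is injective if and only if for every g ∈ G, j(T) ∩ (g · j(T)) ≠ ∅ implies g ∈ H. -/

import Mathlib

/-- The equivalence relation on `G × T` whose quotient is `(G × T)/H`, for the
`H`-action `k · (g, t) := (g k⁻¹, k · t)`. -/
def sliceSetoid {G : Type*} [Group G] (H : Subgroup G) (T : Type*) [MulAction H T] :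
    Setoid (G × T) where
  r p p' := ∃ k : H, p'.1 = p.1 * (k : G)⁻¹ ∧ p'.2 = k • p.2
  iseqv := by
    refine ⟨?_, ?_, ?_⟩
    · intro p
      exact ⟨1, by simp, by simp⟩
    · rintro p p' ⟨k, h1, h2⟩
      refine ⟨k⁻¹, ?_, ?_⟩
      · simp [h1, mul_assoc]
      · simp [h2]
    · rintro p p' p'' ⟨k, h1, h2⟩ ⟨k', h1', h2'⟩
      refine ⟨k' * k, ?_, ?_⟩
      · simp [h1', h1, mul_assoc]
      · rw [h2', h2, mul_smul]

/-- Let `G` be a group, `H ≤ G`, `Y` a `G`-set, `T` an `H`-set, and `j : T → Y` an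
injective `H`-equivariant map.  On `E := (G × T)/H` the map `ε([g,t]) := g · j(t)` is
well-defined, and `ε` is injective if and only if for every `g ∈ G`,
`j(T) ∩ (g · j(T)) ≠ ∅` implies `g ∈ H`. -/
theorem molino_exponential_injective_iff_slice
    {G Y T : Type*} [Group G] (H : Subgroup G) [MulAction G Y] [MulAction H T]
    (j : T → Y) (hj : Function.Injective j)
    (hequiv : ∀ (k : H) (t : T), j (k • t) = (k : G) • j t) :
    ∃ ε : Quotient (sliceSetoid H T) → Y,
      (∀ (g : G) (t : T), ε (Quotient.mk (sliceSetoid H T) (g, t)) = g • j t) ∧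
      (Function.Injective ε ↔
        ∀ g : G, (∃ t t' : T, j t = g • j t') → g ∈ H) := by
  refine ⟨Quotient.lift (fun p : G × T => p.1 • j p.2) ?_, fun g t => rfl, ?_, ?_⟩
  · rintro ⟨g, t⟩ ⟨g', t'⟩ ⟨k, h1, h2⟩
    simp only at h1 h2
    subst h1; subst h2
    simp only [hequiv, smul_smul]
    congr 1
    group
  · intro hinj g ⟨t, t', ht⟩
    have : Quotient.mk (sliceSetoid H T) ((1 : G), t) =
        Quotient.mk (sliceSetoid H T) (g, t') := by
      apply hinj
      simpa using ht
    obtain ⟨k, h1, h2⟩ := Quotient.exact this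
    simp only at h1
    rw [h1, one_mul]
    exact H.inv_mem k.2
  · intro hcond
    intro x y
    induction x using Quotient.inductionOn with
    | h p =>
      induction y using Quotient.inductionOn with
      | h q =>
        obtain ⟨g, t⟩ := p
        obtain ⟨g', t'⟩ := q
        intro h
        simp only [Quotient.lift_mk] at h
        have hkey : j t = (g⁻¹ * g') • j t' := by
          rw [mul_smul, ← h, ← mul_smul, inv_mul_cancel, one_smul]
        have hmem : g⁻¹ * g' ∈ H := hcond _ ⟨t, t', hkey⟩
        apply Quotient.sound
        refine ⟨(⟨g⁻¹ * g', hmem⟩ : H)⁻¹, ?_, ?_⟩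
        · simp [mul_assoc]
        · apply hj
          rw [hequiv, hkey, smul_smul]
          rw [show ((((⟨g⁻¹ * g', hmem⟩ : H)⁻¹ : H) : G) * (g⁻¹ * g')) = 1 by
            exact inv_mul_cancel (g⁻¹ * g'), one_smul]
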